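/- For fixed t > 0, n ≥ 2 and every r₀ > 0 with Z(r) = coth r − 1/r, and for all r > 0: (r/(2t) + Z(r))² ≤ (1 + 2(Z'(r₀) + Z(r₀)/r₀)t + 4Z(r₀)Z'(r₀)t²/r₀)·(r²/(4t²) − r₀²/(4t²)) + (r₀/(2t) + Z(r₀))². -/

import Mathlib

noncomputable def Z : ℝ → ℝ := fun r => Real.cosh r / Real.sinh r - 1 / r

namespace Stmt14Aux

lemma hdm (a : ℝ) (k i j : ℕ) (x : ℝ) :
    HasDerivAt (fun y : ℝ => a * (y ^ k * Real.sinh y ^ i * Real.cosh y ^ j))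
      (a * (((k : ℝ) * x ^ (k - 1)) * (Real.sinh x ^ i * Real.cosh x ^ j)
        + x ^ k * (((i : ℝ) * Real.sinh x ^ (i - 1) * Real.cosh x) * Real.cosh x ^ j
          + Real.sinh x ^ i * ((j : ℝ) * Real.cosh x ^ (j - 1) * Real.sinh x)))) x := by
  have hs := Real.hasDerivAt_sinh x
  have hc := Real.hasDerivAt_cosh x
  have h := (((hasDerivAt_pow k x).mul (hs.pow i)).mul (hc.pow j)).const_mul a
  refine h.congr_deriv ?_
  simp only [Pi.mul_apply, Pi.pow_apply]
  ring

lemma pos_chain {f g : ℝ → ℝ} (hf : ∀ x, HasDerivAt f (g x) x) (h0 : f 0 = 0)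
    (hg : ∀ x, 0 ≤ x → 0 ≤ g x) : ∀ x, 0 ≤ x → 0 ≤ f x := by
  intro x hx
  have hmono : MonotoneOn f (Set.Ici 0) := by
    apply monotoneOn_of_deriv_nonneg (convex_Ici 0)
    · exact fun y _ => (hf y).continuousAt.continuousWithinAt
    · exact fun y _ => (hf y).differentiableAt.differentiableWithinAt
    · intro y hy
      rw [interior_Ici] at hy
      rw [(hf y).deriv]
      exact hg y hy.le
  have h := hmono (Set.mem_Ici.2 le_rfl) (Set.mem_Ici.2 hx) hx
  rw [h0] at h
  exact h
lemma hdW0 (x : ℝ) : HasDerivAt (fun y : ℝ => (-1) * (y ^ 0 * Real.sinh y ^ 1 * Real.cosh y ^ 0) + 1 * (y ^ 1 * Real.sinh y ^ 0 * Real.cosh y ^ 1))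
    (1 * (x ^ 1 * Real.sinh x ^ 1 * Real.cosh x ^ 0)) x := by
  have h := ((hdm (-1) 0 1 0 x).add (hdm 1 1 0 1 x))
  refine h.congr_deriv ?_
  push_cast
  ring

lemma hdV0 (x : ℝ) : HasDerivAt (fun y : ℝ => 1 * (y ^ 0 * Real.sinh y ^ 1 * Real.cosh y ^ 0) + (-1) * (y ^ 1 * Real.sinh y ^ 0 * Real.cosh y ^ 0))
    ((-1) * (x ^ 0 * Real.sinh x ^ 0 * Real.cosh x ^ 0) + 1 * (x ^ 0 * Real.sinh x ^ 0 * Real.cosh x ^ 1)) x := by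
  have h := ((hdm 1 0 1 0 x).add (hdm (-1) 1 0 0 x))
  refine h.congr_deriv ?_
  push_cast
  ring

lemma hdU0 (x : ℝ) : HasDerivAt (fun y : ℝ => (-1) * (y ^ 0 * Real.sinh y ^ 0 * Real.cosh y ^ 0) + 1 * (y ^ 0 * Real.sinh y ^ 0 * Real.cosh y ^ 1) + (-1/2) * (y ^ 2 * Real.sinh y ^ 0 * Real.cosh y ^ 0))
    (1 * (x ^ 0 * Real.sinh x ^ 1 * Real.cosh x ^ 0) + (-1) * (x ^ 1 * Real.sinh x ^ 0 * Real.cosh x ^ 0)) x := by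
  have h := (((hdm (-1) 0 0 0 x).add (hdm 1 0 0 1 x)).add (hdm (-1/2) 2 0 0 x))
  refine h.congr_deriv ?_
  push_cast
  ring

lemma hdF0 (x : ℝ) : HasDerivAt (fun y : ℝ => (-2) * (y ^ 0 * Real.sinh y ^ 2 * Real.cosh y ^ 0) + 1 * (y ^ 1 * Real.sinh y ^ 1 * Real.cosh y ^ 1) + 1 * (y ^ 2 * Real.sinh y ^ 0 * Real.cosh y ^ 0))
    ((-3) * (x ^ 0 * Real.sinh x ^ 1 * Real.cosh x ^ 1) + 2 * (x ^ 1 * Real.sinh x ^ 0 * Real.cosh x ^ 0) + 1 * (x ^ 1 * Real.sinh x ^ 0 * Real.cosh x ^ 2) + 1 * (x ^ 1 * Real.sinh x ^ 2 * Real.cosh x ^ 0)) x := by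
  have h := (((hdm (-2) 0 2 0 x).add (hdm 1 1 1 1 x)).add (hdm 1 2 0 0 x))
  refine h.congr_deriv ?_
  push_cast
  ring

lemma hdF1 (x : ℝ) : HasDerivAt (fun y : ℝ => (-3) * (y ^ 0 * Real.sinh y ^ 1 * Real.cosh y ^ 1) + 2 * (y ^ 1 * Real.sinh y ^ 0 * Real.cosh y ^ 0) + 1 * (y ^ 1 * Real.sinh y ^ 0 * Real.cosh y ^ 2) + 1 * (y ^ 1 * Real.sinh y ^ 2 * Real.cosh y ^ 0))
    (2 * (x ^ 0 * Real.sinh x ^ 0 * Real.cosh x ^ 0) + (-2) * (x ^ 0 * Real.sinh x ^ 0 * Real.cosh x ^ 2) + (-2) * (x ^ 0 * Real.sinh x ^ 2 * Real.cosh x ^ 0) + 4 * (x ^ 1 * Real.sinh x ^ 1 * Real.cosh x ^ 1)) x := by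
  have h := ((((hdm (-3) 0 1 1 x).add (hdm 2 1 0 0 x)).add (hdm 1 1 0 2 x)).add (hdm 1 1 2 0 x))
  refine h.congr_deriv ?_
  push_cast
  ring

lemma hdF2 (x : ℝ) : HasDerivAt (fun y : ℝ => 2 * (y ^ 0 * Real.sinh y ^ 0 * Real.cosh y ^ 0) + (-2) * (y ^ 0 * Real.sinh y ^ 0 * Real.cosh y ^ 2) + (-2) * (y ^ 0 * Real.sinh y ^ 2 * Real.cosh y ^ 0) + 4 * (y ^ 1 * Real.sinh y ^ 1 * Real.cosh y ^ 1))
    ((-4) * (x ^ 0 * Real.sinh x ^ 1 * Real.cosh x ^ 1) + 4 * (x ^ 1 * Real.sinh x ^ 0 * Real.cosh x ^ 2) + 4 * (x ^ 1 * Real.sinh x ^ 2 * Real.cosh x ^ 0)) x := by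
  have h := ((((hdm 2 0 0 0 x).add (hdm (-2) 0 0 2 x)).add (hdm (-2) 0 2 0 x)).add (hdm 4 1 1 1 x))
  refine h.congr_deriv ?_
  push_cast
  ring

lemma hdH0 (x : ℝ) : HasDerivAt (fun y : ℝ => 1 * (y ^ 0 * Real.sinh y ^ 3 * Real.cosh y ^ 0) + (-1) * (y ^ 3 * Real.sinh y ^ 0 * Real.cosh y ^ 1))
    (3 * (x ^ 0 * Real.sinh x ^ 2 * Real.cosh x ^ 1) + (-3) * (x ^ 2 * Real.sinh x ^ 0 * Real.cosh x ^ 1) + (-1) * (x ^ 3 * Real.sinh x ^ 1 * Real.cosh x ^ 0)) x := by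
  have h := ((hdm 1 0 3 0 x).add (hdm (-1) 3 0 1 x))
  refine h.congr_deriv ?_
  push_cast
  ring

lemma hdH1 (x : ℝ) : HasDerivAt (fun y : ℝ => 3 * (y ^ 0 * Real.sinh y ^ 2 * Real.cosh y ^ 1) + (-3) * (y ^ 2 * Real.sinh y ^ 0 * Real.cosh y ^ 1) + (-1) * (y ^ 3 * Real.sinh y ^ 1 * Real.cosh y ^ 0))
    (6 * (x ^ 0 * Real.sinh x ^ 1 * Real.cosh x ^ 2) + 3 * (x ^ 0 * Real.sinh x ^ 3 * Real.cosh x ^ 0) + (-6) * (x ^ 1 * Real.sinh x ^ 0 * Real.cosh x ^ 1) + (-6) * (x ^ 2 * Real.sinh x ^ 1 * Real.cosh x ^ 0) + (-1) * (x ^ 3 * Real.sinh x ^ 0 * Real.cosh x ^ 1)) x := by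
  have h := (((hdm 3 0 2 1 x).add (hdm (-3) 2 0 1 x)).add (hdm (-1) 3 1 0 x))
  refine h.congr_deriv ?_
  push_cast
  ring

lemma hdH2 (x : ℝ) : HasDerivAt (fun y : ℝ => 6 * (y ^ 0 * Real.sinh y ^ 1 * Real.cosh y ^ 2) + 3 * (y ^ 0 * Real.sinh y ^ 3 * Real.cosh y ^ 0) + (-6) * (y ^ 1 * Real.sinh y ^ 0 * Real.cosh y ^ 1) + (-6) * (y ^ 2 * Real.sinh y ^ 1 * Real.cosh y ^ 0) + (-1) * (y ^ 3 * Real.sinh y ^ 0 * Real.cosh y ^ 1))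
    ((-6) * (x ^ 0 * Real.sinh x ^ 0 * Real.cosh x ^ 1) + 6 * (x ^ 0 * Real.sinh x ^ 0 * Real.cosh x ^ 3) + 21 * (x ^ 0 * Real.sinh x ^ 2 * Real.cosh x ^ 1) + (-18) * (x ^ 1 * Real.sinh x ^ 1 * Real.cosh x ^ 0) + (-9) * (x ^ 2 * Real.sinh x ^ 0 * Real.cosh x ^ 1) + (-1) * (x ^ 3 * Real.sinh x ^ 1 * Real.cosh x ^ 0)) x := by
  have h := (((((hdm 6 0 1 2 x).add (hdm 3 0 3 0 x)).add (hdm (-6) 1 0 1 x)).add (hdm (-6) 2 1 0 x)).add (hdm (-1) 3 0 1 x))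
  refine h.congr_deriv ?_
  push_cast
  ring

lemma hdH3 (x : ℝ) : HasDerivAt (fun y : ℝ => (-6) * (y ^ 0 * Real.sinh y ^ 0 * Real.cosh y ^ 1) + 6 * (y ^ 0 * Real.sinh y ^ 0 * Real.cosh y ^ 3) + 21 * (y ^ 0 * Real.sinh y ^ 2 * Real.cosh y ^ 1) + (-18) * (y ^ 1 * Real.sinh y ^ 1 * Real.cosh y ^ 0) + (-9) * (y ^ 2 * Real.sinh y ^ 0 * Real.cosh y ^ 1) + (-1) * (y ^ 3 * Real.sinh y ^ 1 * Real.cosh y ^ 0))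
    ((-24) * (x ^ 0 * Real.sinh x ^ 1 * Real.cosh x ^ 0) + 60 * (x ^ 0 * Real.sinh x ^ 1 * Real.cosh x ^ 2) + 21 * (x ^ 0 * Real.sinh x ^ 3 * Real.cosh x ^ 0) + (-36) * (x ^ 1 * Real.sinh x ^ 0 * Real.cosh x ^ 1) + (-12) * (x ^ 2 * Real.sinh x ^ 1 * Real.cosh x ^ 0) + (-1) * (x ^ 3 * Real.sinh x ^ 0 * Real.cosh x ^ 1)) x := by
  have h := ((((((hdm (-6) 0 0 1 x).add (hdm 6 0 0 3 x)).add (hdm 21 0 2 1 x)).add (hdm (-18) 1 1 0 x)).add (hdm (-9) 2 0 1 x)).add (hdm (-1) 3 1 0 x))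
  refine h.congr_deriv ?_
  push_cast
  ring

lemma hdH4 (x : ℝ) : HasDerivAt (fun y : ℝ => (-24) * (y ^ 0 * Real.sinh y ^ 1 * Real.cosh y ^ 0) + 60 * (y ^ 0 * Real.sinh y ^ 1 * Real.cosh y ^ 2) + 21 * (y ^ 0 * Real.sinh y ^ 3 * Real.cosh y ^ 0) + (-36) * (y ^ 1 * Real.sinh y ^ 0 * Real.cosh y ^ 1) + (-12) * (y ^ 2 * Real.sinh y ^ 1 * Real.cosh y ^ 0) + (-1) * (y ^ 3 * Real.sinh y ^ 0 * Real.cosh y ^ 1))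
    ((-60) * (x ^ 0 * Real.sinh x ^ 0 * Real.cosh x ^ 1) + 60 * (x ^ 0 * Real.sinh x ^ 0 * Real.cosh x ^ 3) + 183 * (x ^ 0 * Real.sinh x ^ 2 * Real.cosh x ^ 1) + (-60) * (x ^ 1 * Real.sinh x ^ 1 * Real.cosh x ^ 0) + (-15) * (x ^ 2 * Real.sinh x ^ 0 * Real.cosh x ^ 1) + (-1) * (x ^ 3 * Real.sinh x ^ 1 * Real.cosh x ^ 0)) x := by
  have h := ((((((hdm (-24) 0 1 0 x).add (hdm 60 0 1 2 x)).add (hdm 21 0 3 0 x)).add (hdm (-36) 1 0 1 x)).add (hdm (-12) 2 1 0 x)).add (hdm (-1) 3 0 1 x))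
  refine h.congr_deriv ?_
  push_cast
  ring

lemma hdH5 (x : ℝ) : HasDerivAt (fun y : ℝ => (-60) * (y ^ 0 * Real.sinh y ^ 0 * Real.cosh y ^ 1) + 60 * (y ^ 0 * Real.sinh y ^ 0 * Real.cosh y ^ 3) + 183 * (y ^ 0 * Real.sinh y ^ 2 * Real.cosh y ^ 1) + (-60) * (y ^ 1 * Real.sinh y ^ 1 * Real.cosh y ^ 0) + (-15) * (y ^ 2 * Real.sinh y ^ 0 * Real.cosh y ^ 1) + (-1) * (y ^ 3 * Real.sinh y ^ 1 * Real.cosh y ^ 0))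
    ((-120) * (x ^ 0 * Real.sinh x ^ 1 * Real.cosh x ^ 0) + 546 * (x ^ 0 * Real.sinh x ^ 1 * Real.cosh x ^ 2) + 183 * (x ^ 0 * Real.sinh x ^ 3 * Real.cosh x ^ 0) + (-90) * (x ^ 1 * Real.sinh x ^ 0 * Real.cosh x ^ 1) + (-18) * (x ^ 2 * Real.sinh x ^ 1 * Real.cosh x ^ 0) + (-1) * (x ^ 3 * Real.sinh x ^ 0 * Real.cosh x ^ 1)) x := by
  have h := ((((((hdm (-60) 0 0 1 x).add (hdm 60 0 0 3 x)).add (hdm 183 0 2 1 x)).add (hdm (-60) 1 1 0 x)).add (hdm (-15) 2 0 1 x)).add (hdm (-1) 3 1 0 x))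
  refine h.congr_deriv ?_
  push_cast
  ring

lemma hdH6 (x : ℝ) : HasDerivAt (fun y : ℝ => (-120) * (y ^ 0 * Real.sinh y ^ 1 * Real.cosh y ^ 0) + 546 * (y ^ 0 * Real.sinh y ^ 1 * Real.cosh y ^ 2) + 183 * (y ^ 0 * Real.sinh y ^ 3 * Real.cosh y ^ 0) + (-90) * (y ^ 1 * Real.sinh y ^ 0 * Real.cosh y ^ 1) + (-18) * (y ^ 2 * Real.sinh y ^ 1 * Real.cosh y ^ 0) + (-1) * (y ^ 3 * Real.sinh y ^ 0 * Real.cosh y ^ 1))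
    ((-210) * (x ^ 0 * Real.sinh x ^ 0 * Real.cosh x ^ 1) + 546 * (x ^ 0 * Real.sinh x ^ 0 * Real.cosh x ^ 3) + 1641 * (x ^ 0 * Real.sinh x ^ 2 * Real.cosh x ^ 1) + (-126) * (x ^ 1 * Real.sinh x ^ 1 * Real.cosh x ^ 0) + (-21) * (x ^ 2 * Real.sinh x ^ 0 * Real.cosh x ^ 1) + (-1) * (x ^ 3 * Real.sinh x ^ 1 * Real.cosh x ^ 0)) x := by
  have h := ((((((hdm (-120) 0 1 0 x).add (hdm 546 0 1 2 x)).add (hdm 183 0 3 0 x)).add (hdm (-90) 1 0 1 x)).add (hdm (-18) 2 1 0 x)).add (hdm (-1) 3 0 1 x))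
  refine h.congr_deriv ?_
  push_cast
  ring

lemma hdS0 (x : ℝ) : HasDerivAt (fun y : ℝ => 1 * (y ^ 0 * Real.sinh y ^ 2 * Real.cosh y ^ 1) + 1 * (y ^ 1 * Real.sinh y ^ 1 * Real.cosh y ^ 0) + (-2) * (y ^ 2 * Real.sinh y ^ 0 * Real.cosh y ^ 1))
    (1 * (x ^ 0 * Real.sinh x ^ 1 * Real.cosh x ^ 0) + 2 * (x ^ 0 * Real.sinh x ^ 1 * Real.cosh x ^ 2) + 1 * (x ^ 0 * Real.sinh x ^ 3 * Real.cosh x ^ 0) + (-3) * (x ^ 1 * Real.sinh x ^ 0 * Real.cosh x ^ 1) + (-2) * (x ^ 2 * Real.sinh x ^ 1 * Real.cosh x ^ 0)) x := by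
  have h := (((hdm 1 0 2 1 x).add (hdm 1 1 1 0 x)).add (hdm (-2) 2 0 1 x))
  refine h.congr_deriv ?_
  push_cast
  ring

lemma hdS1 (x : ℝ) : HasDerivAt (fun y : ℝ => 1 * (y ^ 0 * Real.sinh y ^ 1 * Real.cosh y ^ 0) + 2 * (y ^ 0 * Real.sinh y ^ 1 * Real.cosh y ^ 2) + 1 * (y ^ 0 * Real.sinh y ^ 3 * Real.cosh y ^ 0) + (-3) * (y ^ 1 * Real.sinh y ^ 0 * Real.cosh y ^ 1) + (-2) * (y ^ 2 * Real.sinh y ^ 1 * Real.cosh y ^ 0))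
    ((-2) * (x ^ 0 * Real.sinh x ^ 0 * Real.cosh x ^ 1) + 2 * (x ^ 0 * Real.sinh x ^ 0 * Real.cosh x ^ 3) + 7 * (x ^ 0 * Real.sinh x ^ 2 * Real.cosh x ^ 1) + (-7) * (x ^ 1 * Real.sinh x ^ 1 * Real.cosh x ^ 0) + (-2) * (x ^ 2 * Real.sinh x ^ 0 * Real.cosh x ^ 1)) x := by
  have h := (((((hdm 1 0 1 0 x).add (hdm 2 0 1 2 x)).add (hdm 1 0 3 0 x)).add (hdm (-3) 1 0 1 x)).add (hdm (-2) 2 1 0 x))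
  refine h.congr_deriv ?_
  push_cast
  ring

lemma hdS2 (x : ℝ) : HasDerivAt (fun y : ℝ => (-2) * (y ^ 0 * Real.sinh y ^ 0 * Real.cosh y ^ 1) + 2 * (y ^ 0 * Real.sinh y ^ 0 * Real.cosh y ^ 3) + 7 * (y ^ 0 * Real.sinh y ^ 2 * Real.cosh y ^ 1) + (-7) * (y ^ 1 * Real.sinh y ^ 1 * Real.cosh y ^ 0) + (-2) * (y ^ 2 * Real.sinh y ^ 0 * Real.cosh y ^ 1))
    ((-9) * (x ^ 0 * Real.sinh x ^ 1 * Real.cosh x ^ 0) + 20 * (x ^ 0 * Real.sinh x ^ 1 * Real.cosh x ^ 2) + 7 * (x ^ 0 * Real.sinh x ^ 3 * Real.cosh x ^ 0) + (-11) * (x ^ 1 * Real.sinh x ^ 0 * Real.cosh x ^ 1) + (-2) * (x ^ 2 * Real.sinh x ^ 1 * Real.cosh x ^ 0)) x := by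
  have h := (((((hdm (-2) 0 0 1 x).add (hdm 2 0 0 3 x)).add (hdm 7 0 2 1 x)).add (hdm (-7) 1 1 0 x)).add (hdm (-2) 2 0 1 x))
  refine h.congr_deriv ?_
  push_cast
  ring

lemma hdS3 (x : ℝ) : HasDerivAt (fun y : ℝ => (-9) * (y ^ 0 * Real.sinh y ^ 1 * Real.cosh y ^ 0) + 20 * (y ^ 0 * Real.sinh y ^ 1 * Real.cosh y ^ 2) + 7 * (y ^ 0 * Real.sinh y ^ 3 * Real.cosh y ^ 0) + (-11) * (y ^ 1 * Real.sinh y ^ 0 * Real.cosh y ^ 1) + (-2) * (y ^ 2 * Real.sinh y ^ 1 * Real.cosh y ^ 0))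
    ((-20) * (x ^ 0 * Real.sinh x ^ 0 * Real.cosh x ^ 1) + 20 * (x ^ 0 * Real.sinh x ^ 0 * Real.cosh x ^ 3) + 61 * (x ^ 0 * Real.sinh x ^ 2 * Real.cosh x ^ 1) + (-15) * (x ^ 1 * Real.sinh x ^ 1 * Real.cosh x ^ 0) + (-2) * (x ^ 2 * Real.sinh x ^ 0 * Real.cosh x ^ 1)) x := by
  have h := (((((hdm (-9) 0 1 0 x).add (hdm 20 0 1 2 x)).add (hdm 7 0 3 0 x)).add (hdm (-11) 1 0 1 x)).add (hdm (-2) 2 1 0 x))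
  refine h.congr_deriv ?_
  push_cast
  ring

lemma hdS4 (x : ℝ) : HasDerivAt (fun y : ℝ => (-20) * (y ^ 0 * Real.sinh y ^ 0 * Real.cosh y ^ 1) + 20 * (y ^ 0 * Real.sinh y ^ 0 * Real.cosh y ^ 3) + 61 * (y ^ 0 * Real.sinh y ^ 2 * Real.cosh y ^ 1) + (-15) * (y ^ 1 * Real.sinh y ^ 1 * Real.cosh y ^ 0) + (-2) * (y ^ 2 * Real.sinh y ^ 0 * Real.cosh y ^ 1))
    ((-35) * (x ^ 0 * Real.sinh x ^ 1 * Real.cosh x ^ 0) + 182 * (x ^ 0 * Real.sinh x ^ 1 * Real.cosh x ^ 2) + 61 * (x ^ 0 * Real.sinh x ^ 3 * Real.cosh x ^ 0) + (-19) * (x ^ 1 * Real.sinh x ^ 0 * Real.cosh x ^ 1) + (-2) * (x ^ 2 * Real.sinh x ^ 1 * Real.cosh x ^ 0)) x := by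
  have h := (((((hdm (-20) 0 0 1 x).add (hdm 20 0 0 3 x)).add (hdm 61 0 2 1 x)).add (hdm (-15) 1 1 0 x)).add (hdm (-2) 2 0 1 x))
  refine h.congr_deriv ?_
  push_cast
  ring

lemma hdS5 (x : ℝ) : HasDerivAt (fun y : ℝ => (-35) * (y ^ 0 * Real.sinh y ^ 1 * Real.cosh y ^ 0) + 182 * (y ^ 0 * Real.sinh y ^ 1 * Real.cosh y ^ 2) + 61 * (y ^ 0 * Real.sinh y ^ 3 * Real.cosh y ^ 0) + (-19) * (y ^ 1 * Real.sinh y ^ 0 * Real.cosh y ^ 1) + (-2) * (y ^ 2 * Real.sinh y ^ 1 * Real.cosh y ^ 0))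
    ((-54) * (x ^ 0 * Real.sinh x ^ 0 * Real.cosh x ^ 1) + 182 * (x ^ 0 * Real.sinh x ^ 0 * Real.cosh x ^ 3) + 547 * (x ^ 0 * Real.sinh x ^ 2 * Real.cosh x ^ 1) + (-23) * (x ^ 1 * Real.sinh x ^ 1 * Real.cosh x ^ 0) + (-2) * (x ^ 2 * Real.sinh x ^ 0 * Real.cosh x ^ 1)) x := by
  have h := (((((hdm (-35) 0 1 0 x).add (hdm 182 0 1 2 x)).add (hdm 61 0 3 0 x)).add (hdm (-19) 1 0 1 x)).add (hdm (-2) 2 1 0 x))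
  refine h.congr_deriv ?_
  push_cast
  ring




lemma sinh_nn {x : ℝ} (hx : 0 ≤ x) : 0 ≤ Real.sinh x := Real.sinh_nonneg_iff.mpr hx

lemma self_le_sinh {x : ℝ} (hx : 0 ≤ x) : x ≤ Real.sinh x := Real.self_le_sinh_iff.mpr hx

lemma factW (x : ℝ) (hx : 0 ≤ x) : Real.sinh x ≤ x * Real.cosh x := by
  have h := pos_chain hdW0 (by norm_num)
    (fun y hy => by have := sinh_nn hy; positivity) x hx
  nlinarith [h]

lemma factU (x : ℝ) (hx : 0 ≤ x) : 1 + x ^ 2 / 2 ≤ Real.cosh x := by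
  have h := pos_chain hdU0 (by norm_num)
    (fun y hy => by have := self_le_sinh hy; nlinarith) x hx
  nlinarith [h]

lemma factF (x : ℝ) (hx : 0 ≤ x) :
    2 * Real.sinh x ^ 2 ≤ x * Real.sinh x * Real.cosh x + x ^ 2 := by
  have t3 : ∀ y : ℝ, 0 ≤ y → 0 ≤ (-4:ℝ) * (y ^ 0 * Real.sinh y ^ 1 * Real.cosh y ^ 1)
      + 4 * (y ^ 1 * Real.sinh y ^ 0 * Real.cosh y ^ 2)
      + 4 * (y ^ 1 * Real.sinh y ^ 2 * Real.cosh y ^ 0) := by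
    intro y hy
    have h1 := factW y hy
    have h2 := Real.cosh_pos (x := y)
    have h3 := sinh_nn hy
    nlinarith [mul_nonneg (mul_nonneg hy h3) h3]
  have h2 := pos_chain hdF2 (by norm_num) t3
  have h1 := pos_chain hdF1 (by norm_num) h2
  have h0 := pos_chain hdF0 (by norm_num) h1
  nlinarith [h0 x hx]

lemma factH (x : ℝ) (hx : 0 ≤ x) : x ^ 3 * Real.cosh x ≤ Real.sinh x ^ 3 := by
  have t7 : ∀ y : ℝ, 0 ≤ y → 0 ≤ (-210:ℝ) * (y ^ 0 * Real.sinh y ^ 0 * Real.cosh y ^ 1)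
      + 546 * (y ^ 0 * Real.sinh y ^ 0 * Real.cosh y ^ 3)
      + 1641 * (y ^ 0 * Real.sinh y ^ 2 * Real.cosh y ^ 1)
      + (-126) * (y ^ 1 * Real.sinh y ^ 1 * Real.cosh y ^ 0)
      + (-21) * (y ^ 2 * Real.sinh y ^ 0 * Real.cosh y ^ 1)
      + (-1) * (y ^ 3 * Real.sinh y ^ 1 * Real.cosh y ^ 0) := by
    intro y hy
    have hs := sinh_nn hy
    have hsc := factW y hy
    have hU := factU y hy
    have hc := Real.one_le_cosh y
    have hcp := Real.cosh_pos (x := y)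
    have h1 : y * Real.sinh y ≤ y ^ 2 * Real.cosh y := by nlinarith
    have h2 : y ^ 3 * Real.sinh y ≤ y ^ 4 * Real.cosh y := by
      nlinarith [pow_nonneg hy 3]
    have h3 : Real.cosh y + y ^ 2 * Real.cosh y + y ^ 4 * Real.cosh y / 4
        ≤ Real.cosh y ^ 3 := by
      nlinarith [mul_le_mul_of_nonneg_left
        (mul_self_le_mul_self (by positivity : (0:ℝ) ≤ 1 + y ^ 2 / 2) hU) hcp.le]
    have h4 : 0 ≤ Real.sinh y ^ 2 * Real.cosh y := by positivity
    have h5 : 0 ≤ y ^ 2 * Real.cosh y := by positivity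
    have h6 : 0 ≤ y ^ 4 * Real.cosh y := by positivity
    nlinarith
  have h6 := pos_chain hdH6 (by norm_num) t7
  have h5 := pos_chain hdH5 (by norm_num) h6
  have h4 := pos_chain hdH4 (by norm_num) h5
  have h3 := pos_chain hdH3 (by norm_num) h4
  have h2 := pos_chain hdH2 (by norm_num) h3
  have h1 := pos_chain hdH1 (by norm_num) h2
  have h0 := pos_chain hdH0 (by norm_num) h1
  nlinarith [h0 x hx]

lemma factS (x : ℝ) (hx : 0 ≤ x) :
    0 ≤ Real.sinh x ^ 2 * Real.cosh x + x * Real.sinh x - 2 * x ^ 2 * Real.cosh x := by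
  have t6 : ∀ y : ℝ, 0 ≤ y → 0 ≤ (-54:ℝ) * (y ^ 0 * Real.sinh y ^ 0 * Real.cosh y ^ 1)
      + 182 * (y ^ 0 * Real.sinh y ^ 0 * Real.cosh y ^ 3)
      + 547 * (y ^ 0 * Real.sinh y ^ 2 * Real.cosh y ^ 1)
      + (-23) * (y ^ 1 * Real.sinh y ^ 1 * Real.cosh y ^ 0)
      + (-2) * (y ^ 2 * Real.sinh y ^ 0 * Real.cosh y ^ 1) := by
    intro y hy
    have hs := sinh_nn hy
    have hys := self_le_sinh hy
    have hc := Real.one_le_cosh y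
    have hcp := Real.cosh_pos (x := y)
    have h1 : y * Real.sinh y ≤ Real.sinh y ^ 2 * Real.cosh y := by nlinarith
    have h2 : y ^ 2 * Real.cosh y ≤ Real.sinh y ^ 2 * Real.cosh y := by
      nlinarith [mul_le_mul_of_nonneg_right (mul_self_le_mul_self hy hys) hcp.le]
    have h3 : Real.cosh y ≤ Real.cosh y ^ 3 := by
      nlinarith [mul_le_mul_of_nonneg_left (mul_self_le_mul_self zero_le_one hc) hcp.le]
    nlinarith [mul_nonneg (mul_nonneg hs hs) hcp.le]
  have h5 := pos_chain hdS5 (by norm_num) t6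
  have h4 := pos_chain hdS4 (by norm_num) h5
  have h3 := pos_chain hdS3 (by norm_num) h4
  have h2 := pos_chain hdS2 (by norm_num) h3
  have h1 := pos_chain hdS1 (by norm_num) h2
  have h0 := pos_chain hdS0 (by norm_num) h1
  nlinarith [h0 x hx]


end Stmt14Aux

namespace Stmt14Aux

noncomputable def Zd : ℝ → ℝ := fun r => (r ^ 2)⁻¹ - (Real.sinh r ^ 2)⁻¹
noncomputable def Zdd : ℝ → ℝ := fun r => -2 / r ^ 3 + 2 * Real.cosh r / Real.sinh r ^ 3

lemma hasDerivAt_Z {r : ℝ} (hr : 0 < r) : HasDerivAt Z (Zd r) r := by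
  have hs0 : 0 < Real.sinh r := Real.sinh_pos_iff.mpr hr
  have hs : Real.sinh r ≠ 0 := ne_of_gt hs0
  have h1 := (Real.hasDerivAt_cosh r).div (Real.hasDerivAt_sinh r) hs
  have h2 := (hasDerivAt_const r (1:ℝ)).div (hasDerivAt_id r) hr.ne'
  have h := h1.sub h2
  have h3 : Real.sinh r * Real.sinh r - Real.cosh r * Real.cosh r = -1 := by
    have hcs := Real.cosh_sq_sub_sinh_sq r
    nlinarith [hcs]
  have heq : Zd r = (Real.sinh r * Real.sinh r - Real.cosh r * Real.cosh r) / Real.sinh r ^ 2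
      - (0 * r - 1 * 1) / r ^ 2 := by
    simp only [Zd]; rw [h3]; ring
  rw [heq]
  exact h

lemma hasDerivAt_Zd {r : ℝ} (hr : 0 < r) : HasDerivAt Zd (Zdd r) r := by
  have hs0 : 0 < Real.sinh r := Real.sinh_pos_iff.mpr hr
  have h1 := (hasDerivAt_pow 2 r).inv (pow_ne_zero 2 hr.ne')
  have h2 := ((Real.hasDerivAt_sinh r).pow 2).inv (pow_ne_zero 2 (ne_of_gt hs0))
  have h := h1.sub h2
  have heq : Zdd r = -((2:ℕ) * r ^ (2 - 1)) / (r ^ 2) ^ 2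
      - -((2:ℕ) * Real.sinh r ^ (2 - 1) * Real.cosh r) / (Real.sinh r ^ 2) ^ 2 := by
    simp only [Zdd]
    push_cast
    field_simp
    ring
  rw [heq]
  exact h

lemma Z_nonneg {r : ℝ} (hr : 0 < r) : 0 ≤ Z r := by
  have hs0 : 0 < Real.sinh r := Real.sinh_pos_iff.mpr hr
  have hw := factW r hr.le
  have hzz : Z r = (r * Real.cosh r - Real.sinh r) / (r * Real.sinh r) := by
    simp only [Z]; field_simp
  rw [hzz]
  exact div_nonneg (by linarith) (by positivity)

lemma Zd_nonneg {r : ℝ} (hr : 0 < r) : 0 ≤ Zd r := by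
  have hs0 : 0 < Real.sinh r := Real.sinh_pos_iff.mpr hr
  have hle : r ^ 2 ≤ Real.sinh r ^ 2 := pow_le_pow_left₀ hr.le (self_le_sinh hr.le) 2
  have := inv_anti₀ (by positivity : (0:ℝ) < r ^ 2) hle
  simp only [Zd]
  linarith

lemma Zdd_nonpos {r : ℝ} (hr : 0 < r) : Zdd r ≤ 0 := by
  have hs0 : 0 < Real.sinh r := Real.sinh_pos_iff.mpr hr
  have hH := factH r hr.le
  have heq : Zdd r = 2 * (r ^ 3 * Real.cosh r - Real.sinh r ^ 3) / (r ^ 3 * Real.sinh r ^ 3) := by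
    simp only [Zdd]; field_simp; ring
  rw [heq]
  exact div_nonpos_of_nonpos_of_nonneg (by linarith) (by positivity)

lemma rZd_le_Z {r : ℝ} (hr : 0 < r) : r * Zd r ≤ Z r := by
  have hs0 : 0 < Real.sinh r := Real.sinh_pos_iff.mpr hr
  have hF := factF r hr.le
  have key : Z r - r * Zd r
      = (r * Real.sinh r * Real.cosh r + r ^ 2 - 2 * Real.sinh r ^ 2) / (r * Real.sinh r ^ 2) := by
    simp only [Z, Zd]; field_simp; ring
  have h2 : 0 ≤ Z r - r * Zd r := by
    rw [key]
    exact div_nonneg (by linarith) (by positivity)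
  linarith

noncomputable def gf (t : ℝ) : ℝ → ℝ := fun r =>
  1 + 2 * t * (Zd r + Z r / r) + 4 * t ^ 2 * (Z r * Zd r / r)

noncomputable def gd (t r : ℝ) : ℝ :=
  2 * t * (Zdd r + (Zd r * r - Z r) / r ^ 2)
    + 4 * t ^ 2 * (((Zd r * Zd r + Z r * Zdd r) * r - Z r * Zd r) / r ^ 2)

lemma hasDerivAt_gf (t : ℝ) {r : ℝ} (hr : 0 < r) : HasDerivAt (gf t) (gd t r) r := by
  have hZ := hasDerivAt_Z hr
  have hZd := hasDerivAt_Zd hr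
  have h1 := hZ.div (hasDerivAt_id r) hr.ne'
  have h2 := (hZ.mul hZd).div (hasDerivAt_id r) hr.ne'
  have h := (((hZd.add h1).const_mul (2 * t)).const_add 1).add (h2.const_mul (4 * t ^ 2))
  refine h.congr_deriv ?_
  simp only [gd, id, Pi.mul_apply]
  field_simp

lemma gd_nonpos {t r : ℝ} (ht : 0 ≤ t) (hr : 0 < r) : gd t r ≤ 0 := by
  have hs0 : 0 < Real.sinh r := Real.sinh_pos_iff.mpr hr
  have hDA : Zdd r + (Zd r * r - Z r) / r ^ 2 ≤ 0 := by
    have key : (Zdd r + (Zd r * r - Z r) / r ^ 2) * (r ^ 2 * Real.sinh r ^ 3)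
        = -(Real.sinh r ^ 2 * Real.cosh r + r * Real.sinh r - 2 * r ^ 2 * Real.cosh r) := by
      simp only [Zdd, Zd, Z]; field_simp; ring
    have hS := factS r hr.le
    have hpos : 0 < r ^ 2 * Real.sinh r ^ 3 := by positivity
    nlinarith [key, hS, hpos]
  have hDB : ((Zd r * Zd r + Z r * Zdd r) * r - Z r * Zd r) / r ^ 2 ≤ 0 := by
    apply div_nonpos_of_nonpos_of_nonneg _ (sq_nonneg r)
    have h1 := rZd_le_Z hr
    have h2 := Zd_nonneg hr
    have h3 := Z_nonneg hr
    have h4 := Zdd_nonpos hr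
    nlinarith [mul_nonneg (sub_nonneg.mpr h1) h2, mul_nonneg (mul_nonneg hr.le h3) (neg_nonneg.mpr h4)]
  simp only [gd]
  nlinarith [mul_nonneg ht (neg_nonneg.mpr hDA), mul_nonneg (mul_nonneg ht ht) (neg_nonneg.mpr hDB)]

lemma gf_anti (t : ℝ) (ht : 0 ≤ t) : AntitoneOn (gf t) (Set.Ioi 0) := by
  apply antitoneOn_of_deriv_nonpos (convex_Ioi 0)
  · exact fun y hy => (hasDerivAt_gf t hy).continuousAt.continuousWithinAt
  · intro y hy
    rw [interior_Ioi] at hy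
    exact (hasDerivAt_gf t hy).differentiableAt.differentiableWithinAt
  · intro y hy
    rw [interior_Ioi] at hy
    rw [(hasDerivAt_gf t hy).deriv]
    exact gd_nonpos ht hy

noncomputable def hf (t r₀ : ℝ) : ℝ → ℝ := fun x =>
  gf t r₀ * (x ^ 2 / (4 * t ^ 2) - r₀ ^ 2 / (4 * t ^ 2)) + (r₀ / (2 * t) + Z r₀) ^ 2
    - (x / (2 * t) + Z x) ^ 2

lemma hasDerivAt_hf (t r₀ : ℝ) (ht : t ≠ 0) {x : ℝ} (hx : 0 < x) :
    HasDerivAt (hf t r₀) ((gf t r₀ - gf t x) * (x / (2 * t ^ 2))) x := by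
  have hZ := hasDerivAt_Z hx
  have hs0 : 0 < Real.sinh x := Real.sinh_pos_iff.mpr hx
  have h1 := ((hasDerivAt_pow 2 x).div_const (4 * t ^ 2)).sub_const (r₀ ^ 2 / (4 * t ^ 2))
  have h2 := ((hasDerivAt_id x).div_const (2 * t)).add hZ
  have h3 := h2.pow 2
  have h := ((h1.const_mul (gf t r₀)).add_const ((r₀ / (2 * t) + Z r₀) ^ 2)).sub h3
  refine h.congr_deriv ?_
  simp only [gf, id, Pi.add_apply]
  push_cast
  field_simp
  ring

end Stmt14Aux

open Stmt14Aux in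
theorem stmt_14 (n : ℕ) (hn : 2 ≤ n) (t : ℝ) (ht : 0 < t) (r₀ : ℝ) (hr₀ : 0 < r₀)
    (r : ℝ) (hr : 0 < r) :
    (r / (2 * t) + Z r) ^ 2
      ≤ (1 + 2 * (deriv Z r₀ + Z r₀ / r₀) * t + 4 * Z r₀ * deriv Z r₀ * t ^ 2 / r₀)
          * (r ^ 2 / (4 * t ^ 2) - r₀ ^ 2 / (4 * t ^ 2))
        + (r₀ / (2 * t) + Z r₀) ^ 2 := by
  have hdZ := (hasDerivAt_Z hr₀).deriv
  rw [hdZ]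
  have hK : 1 + 2 * (Zd r₀ + Z r₀ / r₀) * t + 4 * Z r₀ * Zd r₀ * t ^ 2 / r₀ = gf t r₀ := by
    simp only [gf]; ring
  rw [hK]
  have h0 : hf t r₀ r₀ = 0 := by simp only [hf]; ring
  have key : 0 ≤ hf t r₀ r := by
    rcases le_total r r₀ with hle | hle
    · have hanti : AntitoneOn (hf t r₀) (Set.Icc r r₀) := by
        apply antitoneOn_of_deriv_nonpos (convex_Icc r r₀)
        · intro y hy
          exact (hasDerivAt_hf t r₀ ht.ne' (lt_of_lt_of_le hr hy.1)).continuousAt.continuousWithinAt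
        · intro y hy
          rw [interior_Icc] at hy
          exact (hasDerivAt_hf t r₀ ht.ne' (lt_trans hr hy.1)).differentiableAt.differentiableWithinAt
        · intro y hy
          rw [interior_Icc] at hy
          have hy0 : 0 < y := lt_trans hr hy.1
          rw [(hasDerivAt_hf t r₀ ht.ne' hy0).deriv]
          have hmono := gf_anti t ht.le (Set.mem_Ioi.2 hy0) (Set.mem_Ioi.2 hr₀) hy.2.le
          have hxp : (0:ℝ) ≤ y / (2 * t ^ 2) := by positivity
          nlinarith [mul_nonneg hxp (sub_nonneg.mpr hmono)]
      have hge := hanti (Set.left_mem_Icc.2 hle) (Set.right_mem_Icc.2 hle) hle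
      rw [h0] at hge
      exact hge
    · have hmono : MonotoneOn (hf t r₀) (Set.Icc r₀ r) := by
        apply monotoneOn_of_deriv_nonneg (convex_Icc r₀ r)
        · intro y hy
          exact (hasDerivAt_hf t r₀ ht.ne' (lt_of_lt_of_le hr₀ hy.1)).continuousAt.continuousWithinAt
        · intro y hy
          rw [interior_Icc] at hy
          exact (hasDerivAt_hf t r₀ ht.ne' (lt_trans hr₀ hy.1)).differentiableAt.differentiableWithinAt
        · intro y hy
          rw [interior_Icc] at hy
          have hy0 : 0 < y := lt_trans hr₀ hy.1
          rw [(hasDerivAt_hf t r₀ ht.ne' hy0).deriv]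
          have hmono2 := gf_anti t ht.le (Set.mem_Ioi.2 hr₀) (Set.mem_Ioi.2 hy0) hy.1.le
          have hxp : (0:ℝ) ≤ y / (2 * t ^ 2) := by positivity
          nlinarith [mul_nonneg hxp (sub_nonneg.mpr hmono2)]
      have hge := hmono (Set.left_mem_Icc.2 hle) (Set.right_mem_Icc.2 hle) hle
      rw [h0] at hge
      exact hge
  simp only [hf] at key
  linarith
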